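/- Let d ≥ 1 and let Φ⁺(d) be the d ⊗ d maximally entangled state. Then sup_{σ ∈ PPT_2(A:B)} F(Φ⁺(d), σ) = 1/d, where A = B = Fin d. Equivalently, the logarithmic fidelity of binegativity of Φ⁺(d) equals log d. -/

import Mathlib

open Matrix
open scoped ComplexOrder

/-- Total positive semidefinite square root: the PSD square root of `M` if `M` is PSD,
and junk value `0` otherwise. -/
noncomputable def msqrt {n : Type*} [Fintype n] [DecidableEq n]
    (M : Matrix n n ℂ) : Matrix n n ℂ :=
  letI := Classical.dec M.PosSemidef
  if h : M.PosSemidef then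
    (h.1.eigenvectorUnitary : Matrix n n ℂ) * diagonal ((↑) ∘ Real.sqrt ∘ h.1.eigenvalues) *
      (star h.1.eigenvectorUnitary : Matrix n n ℂ) else 0

/-- The trace norm `‖M‖₁ = tr √(Mᴴ M)` of a complex matrix, as a real number. -/
noncomputable def traceNorm {n : Type*} [Fintype n] [DecidableEq n]
    (M : Matrix n n ℂ) : ℝ :=
  (msqrt (Mᴴ * M)).trace.re

/-- The partial transpose over the second party `B`:
`M^{T_B}((a,b),(a',b')) = M((a,b'),(a',b))`. -/
def ptB {A B : Type*} (M : Matrix (A × B) (A × B) ℂ) : Matrix (A × B) (A × B) ℂ :=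
  fun x y => M (x.1, y.2) (y.1, x.2)

/-- Uhlmann fidelity `F(ρ,σ) = (tr √(√σ ρ √σ))²` between positive semidefinite matrices. -/
noncomputable def fidelity {n : Type*} [Fintype n] [DecidableEq n]
    (ρ σ : Matrix n n ℂ) : ℝ :=
  ((msqrt (msqrt σ * ρ * msqrt σ)).trace.re) ^ 2

/-- The set `PPT₂(A:B)`: positive semidefinite `σ` such that there exists `ω` with
`−ω ⪯ σ^{T_B} ⪯ ω` and `‖ω^{T_B}‖₁ ≤ 1`. -/
def PPT2set {A B : Type*} [Fintype A] [Fintype B] [DecidableEq A] [DecidableEq B] :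
    Set (Matrix (A × B) (A × B) ℂ) :=
  {σ | σ.PosSemidef ∧ ∃ ω : Matrix (A × B) (A × B) ℂ,
    (ω - ptB σ).PosSemidef ∧ (ω + ptB σ).PosSemidef ∧ traceNorm (ptB ω) ≤ 1}

/-- The `d ⊗ d` maximally entangled state `Φ⁺(d)`:
`Φ⁺(d)((i,k),(j,l)) = 1/d` if `i = k` and `j = l`, and `0` otherwise. -/
noncomputable def MES (d : ℕ) : Matrix (Fin d × Fin d) (Fin d × Fin d) ℂ :=
  fun x y => if x.1 = x.2 ∧ y.1 = y.2 then ((d : ℂ))⁻¹ else 0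


section aux


variable {n : Type*} [Fintype n] [DecidableEq n]

open scoped MatrixOrder in
lemma msqrt_eq_cfcSqrt {M : Matrix n n ℂ} (hM : M.PosSemidef) : msqrt M = CFC.sqrt M := by
  rw [msqrt, dif_pos hM, CFC.sqrt_eq_cfc, cfc_nnreal_eq_real _ M, hM.1.cfc_eq, IsHermitian.cfc,
    Unitary.conjStarAlgAut_apply]
  congr 3
  funext i
  simp [Real.coe_sqrt, hM.eigenvalues_nonneg i]

open scoped MatrixOrder in
lemma msqrt_of_sq {M N : Matrix n n ℂ} (hN : N.PosSemidef) (h : N * N = M) :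
    msqrt M = N := by
  have hM : M.PosSemidef := by
    rw [← h]; nth_rewrite 1 [← hN.isHermitian.eq]
    exact posSemidef_conjTranspose_mul_self N
  rw [msqrt_eq_cfcSqrt hM]
  exact CFC.sqrt_unique h hN.nonneg

lemma trace_nonneg_of_psd {M : Matrix n n ℂ} (hM : M.PosSemidef) : 0 ≤ M.trace := by
  rw [Matrix.trace]
  refine Finset.sum_nonneg fun i _ => ?_
  have := hM.dotProduct_mulVec_nonneg (Pi.single i 1)
  simpa [Matrix.diag, dotProduct, Pi.single_apply] using this

open scoped MatrixOrder in
lemma trace_mul_nonneg_of_psd {X Y : Matrix n n ℂ} (hX : X.PosSemidef) (hY : Y.PosSemidef) :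
    0 ≤ (X * Y).trace := by
  have h2 : (CFC.sqrt X * Y * CFC.sqrt X).trace = (X * Y).trace := by
    rw [trace_mul_cycle, CFC.sqrt_mul_sqrt_self X hX.nonneg]
  rw [← h2]
  have hpsd : (CFC.sqrt X * Y * CFC.sqrt X).PosSemidef := by
    have := hY.conjTranspose_mul_mul_same (CFC.sqrt X)
    rwa [(CFC.sqrt_nonneg X).posSemidef.isHermitian.eq] at this
  exact trace_nonneg_of_psd hpsd


lemma re_trace_le_traceNorm {N : Matrix n n ℂ} (hN : N.IsHermitian) :
    N.trace.re ≤ traceNorm N := by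
  set U : Matrix n n ℂ := (hN.eigenvectorUnitary : Matrix n n ℂ)
  set lam := hN.eigenvalues with hlam
  have hU2 : star U * U = 1 := mem_unitaryGroup_iff'.mp hN.eigenvectorUnitary.2
  set D : Matrix n n ℂ := diagonal (fun i => ((|lam i| : ℝ) : ℂ)) with hD
  set Dl : Matrix n n ℂ := diagonal (fun i => (lam i : ℂ)) with hDl
  have hspec : N = U * Dl * star U := hN.spectral_theorem
  set S : Matrix n n ℂ := U * D * star U with hS
  have hDpsd : D.PosSemidef :=
    Matrix.PosSemidef.diagonal (fun i => Complex.zero_le_real.mpr (abs_nonneg _))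
  have hSpsd : S.PosSemidef := by
    have := hDpsd.mul_mul_conjTranspose_same U
    rwa [← star_eq_conjTranspose] at this
  have hSS : S * S = Nᴴ * N := by
    rw [hN.eq, hspec, hS]
    rw [show U * D * star U * (U * D * star U) = U * (D * (star U * U) * D) * star U by
      noncomm_ring]
    rw [show U * Dl * star U * (U * Dl * star U) = U * (Dl * (star U * U) * Dl) * star U by
      noncomm_ring]
    rw [hU2, mul_one, mul_one, hD, hDl, diagonal_mul_diagonal, diagonal_mul_diagonal]
    have he : (fun i => ((|lam i| : ℝ) : ℂ) * ((|lam i| : ℝ) : ℂ))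
        = fun i => ((lam i : ℝ) : ℂ) * ((lam i : ℝ) : ℂ) := by
      funext i; norm_cast; rw [abs_mul_abs_self]
    rw [he]
  have hmsqrt : msqrt (Nᴴ * N) = S := msqrt_of_sq hSpsd hSS
  have htrS : S.trace = ∑ i, ((|lam i| : ℝ) : ℂ) := by
    rw [hS, trace_mul_cycle, hU2, one_mul, hD, trace_diagonal]
  have htrN : N.trace = ∑ i, (lam i : ℂ) := by
    rw [hspec, trace_mul_cycle, hU2, one_mul, hDl, trace_diagonal]
  rw [traceNorm, hmsqrt, htrS, htrN]
  push_cast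
  simp only [Complex.re_sum, Complex.ofReal_re]
  exact Finset.sum_le_sum fun i _ => le_abs_self _


lemma vecMulVec_mulVec (w : n → ℂ) (x : n → ℂ) :
    (vecMulVec w (star w)) *ᵥ x = (star w ⬝ᵥ x) • w := by
  funext i
  simp only [mulVec, dotProduct, vecMulVec_apply, Pi.smul_apply, smul_eq_mul,
    Finset.sum_mul, Pi.star_apply]
  exact Finset.sum_congr rfl fun j _ => by ring

lemma vecMulVec_star_psd (w : n → ℂ) : (vecMulVec w (star w)).PosSemidef := by
  refine PosSemidef.of_dotProduct_mulVec_nonneg ?_ fun x => ?_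
  · ext x y
    simp [vecMulVec_apply, conjTranspose_apply, mul_comm]
  · rw [_root_.vecMulVec_mulVec, dotProduct_smul, smul_eq_mul]
    have h2 : star x ⬝ᵥ w = star (star w ⬝ᵥ x) := by
      rw [star_dotProduct]
    rw [h2]
    exact mul_star_self_nonneg _

lemma vecMulVec_mul_self (w : n → ℂ) :
    vecMulVec w (star w) * vecMulVec w (star w) = (star w ⬝ᵥ w) • vecMulVec w (star w) := by
  ext x y
  simp only [mul_apply, vecMulVec_apply, Pi.star_apply, Matrix.smul_apply, smul_eq_mul, dotProduct,
    Pi.star_apply]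
  rw [Finset.sum_mul]
  exact Finset.sum_congr rfl fun j _ => by ring

lemma trace_vecMulVec (w : n → ℂ) : (vecMulVec w (star w)).trace = star w ⬝ᵥ w := by
  simp [Matrix.trace, Matrix.diag, vecMulVec_apply, dotProduct, mul_comm]

lemma dotProduct_star_self_re_nonneg (w : n → ℂ) : 0 ≤ (star w ⬝ᵥ w).re :=
  (Complex.nonneg_iff.mp (dotProduct_star_self_nonneg w)).1

lemma dotProduct_star_self_eq_re (w : n → ℂ) : star w ⬝ᵥ w = ((star w ⬝ᵥ w).re : ℂ) := by
  have h := (Complex.nonneg_iff.mp (dotProduct_star_self_nonneg w)).2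
  exact Complex.ext rfl h.symm

lemma smul_psd {c : ℝ} (hc : 0 ≤ c) {M : Matrix n n ℂ} (hM : M.PosSemidef) :
    ((c : ℂ) • M).PosSemidef := by
  refine PosSemidef.of_dotProduct_mulVec_nonneg ?_ fun x => ?_
  · ext x y
    simp only [conjTranspose_apply, Matrix.smul_apply, star_mul', smul_eq_mul, Complex.star_def,
      Complex.conj_ofReal]
    rw [← hM.1.apply x y]
    rfl
  · rw [smul_mulVec, dotProduct_smul, smul_eq_mul]
    exact mul_nonneg (Complex.zero_le_real.mpr hc) (hM.dotProduct_mulVec_nonneg x)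

lemma msqrt_trace_vecMulVec (w : n → ℂ) :
    (msqrt (vecMulVec w (star w))).trace.re = Real.sqrt ((star w ⬝ᵥ w).re) := by
  rcases eq_or_lt_of_le (dotProduct_star_self_re_nonneg w) with h0 | hpos
  · have hz : star w ⬝ᵥ w = 0 := by
      rw [dotProduct_star_self_eq_re w, ← h0]; norm_num
    have hw : w = 0 := dotProduct_star_self_eq_zero.mp hz
    subst hw
    rw [show vecMulVec (0 : n → ℂ) (star 0) = 0 by ext x y; simp [vecMulVec_apply],
      msqrt_of_sq Matrix.PosSemidef.zero (by simp), ← h0]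
    simp
  · have hrpos : 0 < Real.sqrt ((star w ⬝ᵥ w).re) := Real.sqrt_pos.mpr hpos
    have hNpsd : ((((Real.sqrt ((star w ⬝ᵥ w).re))⁻¹ : ℝ) : ℂ) •
        vecMulVec w (star w)).PosSemidef :=
      smul_psd (by positivity) (vecMulVec_star_psd w)
    have hNN : ((((Real.sqrt ((star w ⬝ᵥ w).re))⁻¹ : ℝ) : ℂ) • vecMulVec w (star w)) *
        ((((Real.sqrt ((star w ⬝ᵥ w).re))⁻¹ : ℝ) : ℂ) • vecMulVec w (star w))
        = vecMulVec w (star w) := by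
      rw [Matrix.smul_mul, Matrix.mul_smul, smul_smul, vecMulVec_mul_self, smul_smul]
      nth_rewrite 3 [dotProduct_star_self_eq_re w]
      rw [show (((Real.sqrt ((star w ⬝ᵥ w).re))⁻¹ : ℝ) : ℂ) *
          (((Real.sqrt ((star w ⬝ᵥ w).re))⁻¹ : ℝ) : ℂ) * (((star w ⬝ᵥ w).re : ℝ) : ℂ)
          = ((((Real.sqrt ((star w ⬝ᵥ w).re))⁻¹ * (Real.sqrt ((star w ⬝ᵥ w).re))⁻¹ *
            (star w ⬝ᵥ w).re : ℝ)) : ℂ) by push_cast; ring]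
      rw [show (Real.sqrt ((star w ⬝ᵥ w).re))⁻¹ * (Real.sqrt ((star w ⬝ᵥ w).re))⁻¹ *
          (star w ⬝ᵥ w).re = 1 by
        nth_rewrite 3 [← Real.mul_self_sqrt hpos.le]
        field_simp]
      simp
    rw [msqrt_of_sq hNpsd hNN, Matrix.trace_smul, _root_.trace_vecMulVec]
    nth_rewrite 2 [dotProduct_star_self_eq_re w]
    rw [smul_eq_mul, show (((Real.sqrt ((star w ⬝ᵥ w).re))⁻¹ : ℝ) : ℂ) *
        (((star w ⬝ᵥ w).re : ℝ) : ℂ)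
        = ((((Real.sqrt ((star w ⬝ᵥ w).re))⁻¹ * (star w ⬝ᵥ w).re : ℝ)) : ℂ) by push_cast; ring,
      Complex.ofReal_re]
    nth_rewrite 2 [← Real.mul_self_sqrt hpos.le]
    rw [← mul_assoc, inv_mul_cancel₀ hrpos.ne', one_mul]

lemma herm_mul_vecMulVec {s : Matrix n n ℂ} (hs : s.IsHermitian) (v : n → ℂ) :
    s * vecMulVec v (star v) * s = vecMulVec (s *ᵥ v) (star (s *ᵥ v)) := by
  ext x y
  simp only [mul_apply, vecMulVec_apply, mulVec, dotProduct, Pi.star_apply, star_sum, star_mul']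
  rw [Finset.sum_mul_sum]
  rw [Finset.sum_comm]
  refine Finset.sum_congr rfl fun b _ => ?_
  rw [Finset.sum_mul]
  refine Finset.sum_congr rfl fun a _ => ?_
  rw [← hs.apply y b]
  rw [star_star]
  ring

open scoped MatrixOrder in
lemma fidelity_rankOne {σ : Matrix n n ℂ} (hσ : σ.PosSemidef) (v : n → ℂ) :
    fidelity (vecMulVec v (star v)) σ = (star v ⬝ᵥ (σ *ᵥ v)).re := by
  rw [fidelity]
  have hms : msqrt σ = CFC.sqrt σ := msqrt_eq_cfcSqrt hσ
  rw [hms, herm_mul_vecMulVec (CFC.sqrt_nonneg σ).posSemidef.isHermitian, msqrt_trace_vecMulVec]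
  rw [Real.sq_sqrt (dotProduct_star_self_re_nonneg _)]
  congr 1
  rw [star_mulVec, dotProduct_mulVec, vecMul_vecMul, (CFC.sqrt_nonneg σ).posSemidef.isHermitian.eq,
    CFC.sqrt_mul_sqrt_self σ hσ.nonneg, ← dotProduct_mulVec]

lemma trace_mul_vecMulVec (σ : Matrix n n ℂ) (v : n → ℂ) :
    (σ * vecMulVec v (star v)).trace = star v ⬝ᵥ (σ *ᵥ v) := by
  simp only [Matrix.trace, Matrix.diag, mul_apply, vecMulVec_apply, dotProduct, mulVec,
    Pi.star_apply]
  refine Finset.sum_congr rfl fun x _ => ?_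
  rw [Finset.mul_sum]
  refine Finset.sum_congr rfl fun y _ => ?_
  ring


section ptB
variable {A B : Type*} [Fintype A] [Fintype B] [DecidableEq A] [DecidableEq B]

lemma ptB_ptB (M : Matrix (A × B) (A × B) ℂ) : ptB (ptB M) = M := rfl

lemma trace_ptB (M : Matrix (A × B) (A × B) ℂ) : (ptB M).trace = M.trace := rfl

lemma ptB_conjTranspose (M : Matrix (A × B) (A × B) ℂ) : (ptB M)ᴴ = ptB (Mᴴ) := by
  ext x y
  simp [ptB, conjTranspose_apply]

lemma ptB_isHermitian {M : Matrix (A × B) (A × B) ℂ} (h : M.IsHermitian) :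
    (ptB M).IsHermitian := by
  rw [Matrix.IsHermitian, ptB_conjTranspose, h.eq]

lemma ptB_one : ptB (1 : Matrix (A × B) (A × B) ℂ) = 1 := by
  ext x y
  simp only [ptB, one_apply, Prod.mk.injEq, Prod.ext_iff]
  by_cases h1 : x.1 = y.1 <;> by_cases h2 : x.2 = y.2 <;> simp [h1, h2] <;> tauto

lemma ptB_add (M N : Matrix (A × B) (A × B) ℂ) : ptB (M + N) = ptB M + ptB N := rfl

lemma ptB_sub (M N : Matrix (A × B) (A × B) ℂ) : ptB (M - N) = ptB M - ptB N := rfl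

lemma ptB_smul (c : ℂ) (M : Matrix (A × B) (A × B) ℂ) : ptB (c • M) = c • ptB M := rfl

lemma trace_mul_ptB (X Y : Matrix (A × B) (A × B) ℂ) :
    (ptB X * ptB Y).trace = (X * Y).trace := by
  have h : ∀ M N : Matrix (A × B) (A × B) ℂ,
      (M * N).trace = ∑ p : (A × B) × (A × B), M p.1 p.2 * N p.2 p.1 := by
    intro M N
    rw [Matrix.trace]
    simp only [Matrix.diag, mul_apply]
    exact (Fintype.sum_prod_type
      (f := fun p : (A × B) × (A × B) => M p.1 p.2 * N p.2 p.1)).symm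
  rw [h, h]
  refine Fintype.sum_equiv
    ⟨fun p => ((p.1.1, p.2.2), (p.2.1, p.1.2)), fun p => ((p.1.1, p.2.2), (p.2.1, p.1.2)),
      fun p => rfl, fun p => rfl⟩ _ _ fun p => ?_
  rfl

end ptB

section swap
variable (n : Type*) [Fintype n] [DecidableEq n]

def swapM : Matrix (n × n) (n × n) ℂ := fun x y => if x.1 = y.2 ∧ x.2 = y.1 then 1 else 0

variable {n}

lemma swapM_herm : (swapM n).IsHermitian := by
  ext x y
  simp only [conjTranspose_apply, swapM, apply_ite (star : ℂ → ℂ), star_one, star_zero]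
  have hiff : (y.1 = x.2 ∧ y.2 = x.1) ↔ (x.1 = y.2 ∧ x.2 = y.1) := by
    constructor <;> rintro ⟨a, b⟩ <;> exact ⟨b.symm, a.symm⟩
  rw [if_congr hiff rfl rfl]

lemma swapM_mul_self : swapM n * swapM n = 1 := by
  ext x y
  rw [mul_apply]
  have h : ∀ z : n × n,
      (swapM n) x z * (swapM n) z y
      = if z = (x.2, x.1) then (if x = y then (1 : ℂ) else 0) else 0 := by
    intro z
    by_cases hz : z = (x.2, x.1)
    · subst hz
      simp [swapM, Prod.ext_iff, eq_comm, and_comm]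
    · have : ¬(x.1 = z.2 ∧ x.2 = z.1) := by
        intro hcon
        exact hz (by cases z; simp at hcon ⊢; exact ⟨hcon.2.symm, hcon.1.symm⟩)
      simp [swapM, this, hz]
  rw [Finset.sum_congr rfl fun z _ => h z, Finset.sum_ite_eq' Finset.univ ((x.2, x.1))]
  simp [one_apply]

lemma half_one_add_swap_psd : ((2⁻¹ : ℂ) • (1 + swapM n)).PosSemidef := by
  have hH : ((2⁻¹ : ℂ) • (1 + swapM n)).IsHermitian := by
    have h0 : (1 + swapM n).IsHermitian := Matrix.isHermitian_one.add swapM_herm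
    rw [Matrix.IsHermitian, conjTranspose_smul, h0.eq]
    congr 1
    simp
  have hsq : (1 + swapM n) * (1 + swapM n) = (2 : ℂ) • (1 + swapM n) := by
    rw [mul_add, add_mul, add_mul, swapM_mul_self, two_smul]
    simp only [one_mul, mul_one]
    abel
  have hid : ((2⁻¹ : ℂ) • (1 + swapM n)) * ((2⁻¹ : ℂ) • (1 + swapM n))
      = (2⁻¹ : ℂ) • (1 + swapM n) := by
    rw [smul_mul_smul_comm, hsq, smul_smul]
    norm_num
  have := posSemidef_conjTranspose_mul_self ((2⁻¹ : ℂ) • (1 + swapM n))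
  rwa [hH.eq, hid] at this

lemma half_one_sub_swap_psd : ((2⁻¹ : ℂ) • (1 - swapM n)).PosSemidef := by
  have hH : ((2⁻¹ : ℂ) • (1 - swapM n)).IsHermitian := by
    have h0 : (1 - swapM n).IsHermitian := Matrix.isHermitian_one.sub swapM_herm
    rw [Matrix.IsHermitian, conjTranspose_smul, h0.eq]
    congr 1
    simp
  have hsq : (1 - swapM n) * (1 - swapM n) = (2 : ℂ) • (1 - swapM n) := by
    rw [mul_sub, sub_mul, sub_mul, swapM_mul_self, two_smul]
    simp only [one_mul, mul_one]
    abel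
  have hid : ((2⁻¹ : ℂ) • (1 - swapM n)) * ((2⁻¹ : ℂ) • (1 - swapM n))
      = (2⁻¹ : ℂ) • (1 - swapM n) := by
    rw [smul_mul_smul_comm, hsq, smul_smul]
    norm_num
  have := posSemidef_conjTranspose_mul_self ((2⁻¹ : ℂ) • (1 - swapM n))
  rwa [hH.eq, hid] at this

lemma trace_swap_mul_le {τ ω : Matrix (n × n) (n × n) ℂ}
    (h1 : (ω - τ).PosSemidef) (h2 : (ω + τ).PosSemidef) :
    (swapM n * τ).trace ≤ ω.trace := by
  have t1 : 0 ≤ (((2⁻¹ : ℂ) • (1 + swapM n)) * (ω - τ)).trace :=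
    trace_mul_nonneg_of_psd half_one_add_swap_psd h1
  have t2 : 0 ≤ (((2⁻¹ : ℂ) • (1 - swapM n)) * (ω + τ)).trace :=
    trace_mul_nonneg_of_psd half_one_sub_swap_psd h2
  have emat : ((2⁻¹ : ℂ) • (1 + swapM n)) * (ω - τ) + ((2⁻¹ : ℂ) • (1 - swapM n)) * (ω + τ)
      = ω - swapM n * τ := by
    simp only [Matrix.smul_mul, add_mul, sub_mul, one_mul, mul_add, mul_sub]
    module
  have := add_nonneg t1 t2
  rw [← trace_add, emat, trace_sub] at this
  exact sub_nonneg.mp this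
end swap



noncomputable def mesVec (d : ℕ) : Fin d × Fin d → ℂ :=
  fun x => if x.1 = x.2 then ((Real.sqrt d : ℝ) : ℂ)⁻¹ else 0

lemma sqrt_inv_mul_self (d : ℕ) :
    ((((Real.sqrt d)⁻¹ : ℝ)) : ℂ) * ((((Real.sqrt d)⁻¹ : ℝ)) : ℂ) = (d : ℂ)⁻¹ := by
  rw [← Complex.ofReal_mul, ← mul_inv, Real.mul_self_sqrt (Nat.cast_nonneg d)]
  push_cast
  ring

lemma MES_eq (d : ℕ) : MES d = vecMulVec (mesVec d) (star (mesVec d)) := by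
  ext x y
  simp only [MES, vecMulVec_apply, mesVec, Pi.star_apply]
  by_cases h1 : x.1 = x.2 <;> by_cases h2 : y.1 = y.2 <;> simp [h1, h2]
  rw [← Complex.ofReal_inv, sqrt_inv_mul_self d]

lemma mesVec_norm (d : ℕ) (hd : 1 ≤ d) : star (mesVec d) ⬝ᵥ mesVec d = 1 := by
  have hd0 : (d : ℂ) ≠ 0 := Nat.cast_ne_zero.mpr (by omega)
  simp only [dotProduct, Pi.star_apply, mesVec, Fintype.sum_prod_type]
  simp only [apply_ite (star : ℂ → ℂ), star_zero, ite_mul, zero_mul, mul_ite, mul_zero]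
  have hterm : ∀ i k : Fin d, (if i = k then
      (if i = k then star (((Real.sqrt d : ℝ) : ℂ)⁻¹) *
        ((Real.sqrt d : ℝ) : ℂ)⁻¹ else 0) else 0) = if k = i then (d : ℂ)⁻¹ else 0 := by
    intro i k
    by_cases h : i = k <;> simp [h, eq_comm]
    rw [← Complex.ofReal_inv, sqrt_inv_mul_self d]
  simp only [hterm, Finset.sum_ite_eq, Finset.mem_univ, if_true]
  simp [Finset.card_univ, hd0]

lemma ptB_MES (d : ℕ) : ptB (MES d) = (d : ℂ)⁻¹ • swapM (Fin d) := by
  ext x y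
  simp only [ptB, MES, swapM, Matrix.smul_apply, smul_eq_mul, mul_ite, mul_one, mul_zero]
  have hiff : (x.1 = y.2 ∧ y.1 = x.2) ↔ (x.1 = y.2 ∧ x.2 = y.1) := by
    constructor <;> rintro ⟨a, b⟩ <;> exact ⟨a, b.symm⟩
  rw [if_congr hiff rfl rfl]

lemma traceNorm_psd {M : Matrix n n ℂ} (hM : M.PosSemidef) : traceNorm M = M.trace.re := by
  rw [traceNorm, hM.1.eq, msqrt_of_sq hM rfl]

lemma fidelity_le_of_PPT2 (d : ℕ) (hd : 1 ≤ d) {σ : Matrix (Fin d × Fin d) (Fin d × Fin d) ℂ}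
    (hσ : σ ∈ PPT2set (A := Fin d) (B := Fin d)) : fidelity (MES d) σ ≤ ((d : ℝ))⁻¹ := by
  obtain ⟨hpsd, ω, h1, h2, h3⟩ := hσ
  rw [MES_eq, fidelity_rankOne hpsd, ← trace_mul_vecMulVec σ (mesVec d), ← MES_eq]
  have htr : (σ * MES d).trace = (d : ℂ)⁻¹ * (swapM (Fin d) * ptB σ).trace := by
    rw [← trace_mul_ptB, ptB_MES, Matrix.mul_smul, trace_smul, trace_mul_comm]
    simp [smul_eq_mul]
  have hle : (swapM (Fin d) * ptB σ).trace ≤ ω.trace := trace_swap_mul_le h1 h2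
  have hωpsd : ω.PosSemidef := by
    have hsum := h1.add h2
    have heq : (((2⁻¹ : ℝ)) : ℂ) • ((ω - ptB σ) + (ω + ptB σ)) = ω := by
      push_cast
      module
    rw [← heq]
    exact smul_psd (by norm_num) hsum
  have hωtr : ω.trace.re ≤ 1 :=
    calc ω.trace.re = (ptB ω).trace.re := by rw [trace_ptB]
    _ ≤ traceNorm (ptB ω) := re_trace_le_traceNorm (ptB_isHermitian hωpsd.1)
    _ ≤ 1 := h3
  have hre : (σ * MES d).trace.re = (d : ℝ)⁻¹ * (swapM (Fin d) * ptB σ).trace.re := by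
    rw [htr, show ((d : ℂ))⁻¹ = ((((d : ℝ))⁻¹ : ℝ) : ℂ) by push_cast; ring]
    exact Complex.re_ofReal_mul _ _
  rw [hre]
  have hd0 : (0:ℝ) ≤ (d : ℝ)⁻¹ := by positivity
  have hre2 : (swapM (Fin d) * ptB σ).trace.re ≤ ω.trace.re := (Complex.le_def.mp hle).1
  calc (d:ℝ)⁻¹ * (swapM (Fin d) * ptB σ).trace.re ≤ (d:ℝ)⁻¹ * ω.trace.re :=
        mul_le_mul_of_nonneg_left hre2 hd0
  _ ≤ (d:ℝ)⁻¹ * 1 := mul_le_mul_of_nonneg_left hωtr hd0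
  _ = (d:ℝ)⁻¹ := mul_one _

lemma exists_PPT2_fidelity_eq (d : ℕ) (hd : 1 ≤ d) :
    ∃ σ ∈ PPT2set (A := Fin d) (B := Fin d), fidelity (MES d) σ = ((d : ℝ))⁻¹ := by
  have hdR : (0:ℝ) < (d : ℝ) := by exact_mod_cast Nat.pos_of_ne_zero (by omega)
  have hd1 : (0:ℝ) < (d : ℝ) + 1 := by linarith
  set c₁ : ℝ := ((d:ℝ) + 1)⁻¹ with hc₁
  set c₂ : ℝ := ((d:ℝ) + 1)⁻¹ * (d:ℝ)⁻¹ with hc₂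
  have hc₁0 : 0 ≤ c₁ := by positivity
  have hc₂0 : 0 ≤ c₂ := by positivity
  set σ₀ : Matrix (Fin d × Fin d) (Fin d × Fin d) ℂ :=
    ((c₁ : ℝ) : ℂ) • MES d + ((c₂ : ℝ) : ℂ) • 1 with hσ₀def
  have hMESpsd : (MES d).PosSemidef := by
    rw [MES_eq]; exact vecMulVec_star_psd _
  have hσ₀psd : σ₀.PosSemidef :=
    (smul_psd hc₁0 hMESpsd).add (smul_psd hc₂0 Matrix.PosSemidef.one)
  have hcast : ((c₁ : ℝ) : ℂ) * ((d : ℂ))⁻¹ = ((c₂ : ℝ) : ℂ) := by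
    rw [hc₁, hc₂, Complex.ofReal_mul, Complex.ofReal_inv, Complex.ofReal_inv,
      Complex.ofReal_add, Complex.ofReal_natCast, Complex.ofReal_one]
  have hτ : ptB σ₀ = (((2 * c₂ : ℝ)) : ℂ) • ((2⁻¹ : ℂ) • (1 + swapM (Fin d))) := by
    rw [hσ₀def, ptB_add, ptB_smul, ptB_smul, ptB_MES, ptB_one, smul_smul, hcast]
    rw [smul_smul, show ((((2 * c₂ : ℝ)) : ℂ) * (2⁻¹ : ℂ)) = ((c₂ : ℝ) : ℂ) by
      push_cast; ring]
    rw [smul_add]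
    abel
  have hτpsd : (ptB σ₀).PosSemidef := by
    rw [hτ]
    exact smul_psd (by positivity) half_one_add_swap_psd
  have hMEStr : (MES d).trace = 1 := by
    rw [MES_eq, _root_.trace_vecMulVec, mesVec_norm d hd]
  have hψσ : star (mesVec d) ⬝ᵥ (σ₀ *ᵥ mesVec d) = ((c₁ : ℝ) : ℂ) + ((c₂ : ℝ) : ℂ) := by
    rw [hσ₀def, add_mulVec, smul_mulVec, smul_mulVec, one_mulVec]
    rw [show (MES d) *ᵥ mesVec d = mesVec d by
      rw [MES_eq, _root_.vecMulVec_mulVec, mesVec_norm d hd, one_smul]]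
    rw [dotProduct_add, dotProduct_smul, dotProduct_smul, mesVec_norm d hd]
    simp
  refine ⟨σ₀, ⟨hσ₀psd, ptB σ₀, ?_, ?_, ?_⟩, ?_⟩
  · rw [sub_self]
    exact Matrix.PosSemidef.zero
  · exact hτpsd.add hτpsd
  · rw [ptB_ptB, traceNorm_psd hσ₀psd]
    have htr : σ₀.trace = ((c₁ : ℝ) : ℂ) + ((c₂ : ℝ) : ℂ) * ((d : ℝ) : ℂ) * ((d : ℝ) : ℂ) := by
      rw [hσ₀def, trace_add, trace_smul, trace_smul, hMEStr, trace_one]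
      simp only [smul_eq_mul, mul_one]
      congr 1
      rw [Fintype.card_prod, Fintype.card_fin]
      push_cast
      ring
    rw [htr]
    rw [show ((c₁ : ℝ) : ℂ) + ((c₂ : ℝ) : ℂ) * ((d : ℝ) : ℂ) * ((d : ℝ) : ℂ)
        = (((c₁ + c₂ * (d:ℝ) * (d:ℝ) : ℝ)) : ℂ) by push_cast; ring, Complex.ofReal_re]
    rw [hc₁, hc₂]
    rw [show ((d:ℝ) + 1)⁻¹ + ((d:ℝ) + 1)⁻¹ * (d:ℝ)⁻¹ * (d:ℝ) * (d:ℝ) = 1 by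
      field_simp
      ring]
  · rw [MES_eq, fidelity_rankOne hσ₀psd, hψσ]
    rw [show ((c₁ : ℝ) : ℂ) + ((c₂ : ℝ) : ℂ) = (((c₁ + c₂ : ℝ)) : ℂ) by push_cast; ring,
      Complex.ofReal_re, hc₁, hc₂]
    field_simp

theorem sup_fidelity_mes_PPT2 (d : ℕ) (hd : 1 ≤ d) :
    sSup {x : ℝ | ∃ σ ∈ PPT2set (A := Fin d) (B := Fin d), fidelity (MES d) σ = x}
        = ((d : ℝ))⁻¹ ∧
      -Real.log (sSup {x : ℝ | ∃ σ ∈ PPT2set (A := Fin d) (B := Fin d),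
          fidelity (MES d) σ = x}) = Real.log d := by
  have hsup : sSup {x : ℝ | ∃ σ ∈ PPT2set (A := Fin d) (B := Fin d), fidelity (MES d) σ = x}
      = ((d : ℝ))⁻¹ := by
    apply IsGreatest.csSup_eq
    constructor
    · obtain ⟨σ, hσ, hf⟩ := exists_PPT2_fidelity_eq d hd
      exact ⟨σ, hσ, hf⟩
    · rintro x ⟨σ, hσ, rfl⟩
      exact fidelity_le_of_PPT2 d hd hσ
  refine ⟨hsup, ?_⟩
  rw [hsup, Real.log_inv, neg_neg]

end aux
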